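/- Let G be a finitely generated group with subgroups Λ and Σ, let X be a non-trivial Λ-almost invariant subset of G and Y a non-trivial Σ-almost invariant subset of G. Then the map induced by g ↦ g⁻¹, sending the double coset ΣgΛ to Λg⁻¹Σ, restricts to a bijection between the set of double cosets ΣgΛ such that gX crosses Y and the set of double cosets ΛhΣ such that hY crosses X. In particular these two sets of double cosets have the same cardinality (i(D,E) = i(E,D), where D = Λ\X and E = Σ\Y). -/

import Mathlib

/-!
Statement 3: the map induced by $g ↦ g⁻¹$, sending the double coset $ΣgΛ$ to $Λg⁻¹Σ$,
restricts to a bijection between the set of double cosets $ΣgΛ$ such that $gX$ crosses $Y$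
and the set of double cosets $ΛhΣ$ such that $hY$ crosses $X$ (so $i(D,E) = i(E,D)$).
-/

open scoped Pointwise symmDiff

/-- The image of a subset `X ⊆ G` in the set `H\G` of right cosets `Hg`
(the quotient of `G` by the left multiplication action of `H`). -/
def rproj {G : Type*} [Group G] (H : Subgroup G) (X : Set G) :
    Set (Quotient (QuotientGroup.rightRel H)) :=
  Quotient.mk (QuotientGroup.rightRel H) '' X

/-- Two sets are almost equal if their symmetric difference is finite. -/
def AlmostEqSets {α : Type*} (A B : Set α) : Prop :=
  (A ∆ B).Finite

/-- `X ⊆ G` is `H`-almost invariant: `hX = X` for all `h ∈ H`, and for every `g ∈ G`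
the sets `(H\X)g` and `H\X` are almost equal. -/
def IsAlmostInvariant {G : Type*} [Group G] (H : Subgroup G) (X : Set G) : Prop :=
  (∀ h ∈ H, h • X = X) ∧
    ∀ g : G, AlmostEqSets (rproj H ((fun x => x * g) '' X)) (rproj H X)

/-- `X` is a non-trivial `H`-almost invariant subset of `G`:
in addition `H\X` and `H\Xᶜ` are both infinite. -/
def IsNontrivialAlmostInvariant {G : Type*} [Group G] (H : Subgroup G) (X : Set G) : Prop :=
  IsAlmostInvariant H X ∧ (rproj H X).Infinite ∧ (rproj H Xᶜ).Infinite

/-- `X` crosses `Y`, where `Y` is `K`-almost invariant: each of the four sets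
`X ∩ Y`, `Xᶜ ∩ Y`, `X ∩ Yᶜ`, `Xᶜ ∩ Yᶜ` projects to an infinite subset of `K\G`. -/
def Crosses {G : Type*} [Group G] (K : Subgroup G) (X Y : Set G) : Prop :=
  (rproj K (X ∩ Y)).Infinite ∧ (rproj K (Xᶜ ∩ Y)).Infinite ∧
    (rproj K (X ∩ Yᶜ)).Infinite ∧ (rproj K (Xᶜ ∩ Yᶜ)).Infinite

namespace ScottAux

variable {G : Type*} [Group G]

abbrev qmk (H : Subgroup G) (x : G) : Quotient (QuotientGroup.rightRel H) :=
  Quotient.mk (QuotientGroup.rightRel H) x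

lemma qmk_eq_iff {H : Subgroup G} {x y : G} : qmk H x = qmk H y ↔ y * x⁻¹ ∈ H := by
  constructor
  · intro h
    exact (QuotientGroup.rightRel_apply).mp (Quotient.exact h)
  · intro h
    exact Quotient.sound ((QuotientGroup.rightRel_apply).mpr h)

def rmul (H : Subgroup G) (b : G) :
    Quotient (QuotientGroup.rightRel H) → Quotient (QuotientGroup.rightRel H) :=
  Quotient.map (· * b) (fun x y h =>
    QuotientGroup.rightRel_apply.mpr (by
      simpa [mul_inv_rev, mul_assoc] using QuotientGroup.rightRel_apply.mp h))

lemma rmul_qmk (H : Subgroup G) (b x : G) : rmul H b (qmk H x) = qmk H (x * b) := rfl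

lemma rmul_leftInv (H : Subgroup G) (b : G) :
    Function.LeftInverse (rmul H b⁻¹) (rmul H b) := by
  intro q
  induction q using Quotient.inductionOn with
  | h x => show qmk H (x * b * b⁻¹) = qmk H x; rw [mul_inv_cancel_right]

lemma rmul_bijective (H : Subgroup G) (b : G) : Function.Bijective (rmul H b) := by
  refine Function.bijective_iff_has_inverse.mpr ⟨rmul H b⁻¹, rmul_leftInv H b, ?_⟩
  have := rmul_leftInv H b⁻¹
  simpa [Function.RightInverse] using this

lemma rproj_image_mul (H : Subgroup G) (X : Set G) (b : G) :
    rproj H ((fun x => x * b) '' X) = rmul H b '' rproj H X := by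
  unfold rproj
  rw [Set.image_image, Set.image_image]
  rfl

lemma mem_rproj_of_mem (H : Subgroup G) {X : Set G} {x : G} (hx : x ∈ X) :
    qmk H x ∈ rproj H X := ⟨x, hx, rfl⟩

lemma mem_rproj_iff {H : Subgroup G} {X : Set G} (hinv : ∀ h ∈ H, h • X = X) {w : G} :
    qmk H w ∈ rproj H X ↔ w ∈ X := by
  constructor
  · rintro ⟨x, hx, hxw⟩
    have h1 : w * x⁻¹ ∈ H := qmk_eq_iff.mp (hxw : qmk H x = qmk H w)
    have := hinv _ h1
    rw [← this]
    exact ⟨x, hx, by simp [smul_eq_mul, inv_mul_cancel_right, mul_assoc]⟩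
  · exact mem_rproj_of_mem H

lemma rproj_compl {H : Subgroup G} {X : Set G} (hinv : ∀ h ∈ H, h • X = X) :
    rproj H Xᶜ = (rproj H X)ᶜ := by
  ext q
  induction q using Quotient.inductionOn with
  | h x =>
    show qmk H x ∈ _ ↔ qmk H x ∈ _
    have hc : ∀ h ∈ H, h • Xᶜ = Xᶜ := fun h hh => by rw [Set.smul_set_compl, hinv h hh]
    constructor
    · intro h1 h2
      exact (mem_rproj_iff hc).mp h1 ((mem_rproj_iff hinv).mp h2)
    · intro h1
      exact mem_rproj_of_mem H (fun hx => h1 (mem_rproj_of_mem H hx))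

/-- Core lemma (Scott's symmetry argument): if the corner `g•X ∩ Y` has finite image
in `K\G`, then the corner `X ∩ g⁻¹•Y` has finite image in `L\G`. -/
lemma core (L K : Subgroup G) (X Y : Set G) (g : G)
    (hXinv : ∀ h ∈ L, h • X = X)
    (hXai : ∀ b : G, AlmostEqSets (rproj L ((fun x => x * b) '' X)) (rproj L X))
    (hYinv : ∀ k ∈ K, k • Y = Y)
    (hYinf : (rproj K Y).Infinite)
    (hfin : (rproj K ((g • X) ∩ Y)).Finite) :
    (rproj L (X ∩ (g⁻¹ • Y))).Finite := by
  classical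
  -- finite set of representatives of the corner
  set T : Set G := Quotient.out '' (rproj K ((g • X) ∩ Y)) with hTdef
  have hT : T.Finite := hfin.image _
  have hcover : ∀ w ∈ (g • X) ∩ Y, ∃ b ∈ T, qmk K w = qmk K b := by
    intro w hw
    refine ⟨(qmk K w).out, ⟨qmk K w, mem_rproj_of_mem K hw, rfl⟩, ?_⟩
    exact (Quotient.out_eq (qmk K w)).symm
  -- choose y ∈ Y whose K-coset avoids the cosets of T
  obtain ⟨c, hcY, hcT⟩ := (hYinf.diff (hT.image (qmk K))).nonempty
  obtain ⟨y, hyY, rfl⟩ := hcY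
  -- Step 1 claim
  have claim1 : ∀ u : G, g * u ∈ K → u ∈ X →
      qmk L (u * y) ∈ (rproj L ((fun x => x * y) '' X)) ∆ (rproj L X) := by
    intro u hgu huX
    have hnot : u * y ∉ X := by
      intro hmem
      have hY2 : g * (u * y) ∈ Y := by
        have : (g * u) • Y = Y := hYinv _ hgu
        rw [← this]
        exact ⟨y, hyY, by simp [smul_eq_mul, mul_assoc]⟩
      have hX2 : g * (u * y) ∈ g • X := ⟨u * y, hmem, rfl⟩
      obtain ⟨b, hbT, hqb⟩ := hcover _ ⟨hX2, hY2⟩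
      have h3 : qmk K y = qmk K (g * (u * y)) := by
        rw [qmk_eq_iff]
        simpa [mul_assoc] using hgu
      exact hcT ⟨b, hbT, (h3.trans hqb).symm⟩
    rw [Set.mem_symmDiff]
    left
    refine ⟨⟨u * y, ⟨u, huX, rfl⟩, rfl⟩, fun hmem => hnot ((mem_rproj_iff hXinv).mp hmem)⟩
  -- main inclusion
  have hsub : rproj L (X ∩ (g⁻¹ • Y)) ⊆
      ⋃ b ∈ T, (rmul L (y⁻¹ * b) '' ((rproj L ((fun x => x * y) '' X)) ∆ (rproj L X)) ∪
        rmul L b '' ((rproj L ((fun x => x * b⁻¹) '' X)) ∆ (rproj L X))) := by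
    rintro q ⟨w, ⟨hwX, hwY⟩, rfl⟩
    have hgw : g * w ∈ Y := by
      obtain ⟨y', hy', hy'w⟩ := hwY
      have : g * w = y' := by
        rw [← hy'w]; simp [smul_eq_mul, mul_assoc]
      rwa [this]
    obtain ⟨b, hbT, heq⟩ := hcover (g * w) ⟨⟨w, hwX, rfl⟩, hgw⟩
    have hK : b * (g * w)⁻¹ ∈ K := qmk_eq_iff.mp heq
    set u : G := w * b⁻¹ with hu
    have hgu : g * u ∈ K := by
      have : g * u = (b * (g * w)⁻¹)⁻¹ := by
        simp [hu, mul_inv_rev, mul_assoc]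
      rw [this]
      exact K.inv_mem hK
    have hw_eq : w = u * b := by simp [hu, mul_assoc]
    refine Set.mem_biUnion hbT ?_
    by_cases huX : u ∈ X
    · left
      refine ⟨qmk L (u * y), claim1 u hgu huX, ?_⟩
      rw [rmul_qmk]
      congr 1
      rw [hw_eq]
      group
    · right
      refine ⟨qmk L u, ?_, ?_⟩
      · rw [Set.mem_symmDiff]
        left
        exact ⟨⟨u, ⟨w, hwX, by rw [hu]⟩, rfl⟩, fun hmem => huX ((mem_rproj_iff hXinv).mp hmem)⟩
      · rw [rmul_qmk, ← hw_eq]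
  refine Set.Finite.subset ?_ hsub
  refine hT.biUnion (fun b _ => Set.Finite.union ?_ ?_)
  · exact ((hXai y : Set.Finite _).image _)
  · exact ((hXai b⁻¹ : Set.Finite _).image _)


lemma nontriv_compl {L : Subgroup G} {X : Set G}
    (h : IsNontrivialAlmostInvariant L X) : IsNontrivialAlmostInvariant L Xᶜ := by
  obtain ⟨⟨hinv, hai⟩, hinf1, hinf2⟩ := h
  refine ⟨⟨fun g hg => by rw [Set.smul_set_compl, hinv g hg], fun b => ?_⟩, hinf2, ?_⟩
  · show Set.Finite _
    rw [rproj_image_mul, rproj_compl hinv, Set.image_compl_eq (rmul_bijective L b),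
      compl_symmDiff_compl, ← rproj_image_mul]
    exact hai b
  · rwa [compl_compl]

lemma corner_inf_iff {L K : Subgroup G} {X Y : Set G}
    (hX : IsNontrivialAlmostInvariant L X) (hY : IsNontrivialAlmostInvariant K Y) (g : G) :
    (rproj K ((g • X) ∩ Y)).Infinite ↔ (rproj L (X ∩ (g⁻¹ • Y))).Infinite := by
  have h1 : (rproj K ((g • X) ∩ Y)).Finite ↔ (rproj L (X ∩ (g⁻¹ • Y))).Finite := by
    constructor
    · exact core L K X Y g hX.1.1 hX.1.2 hY.1.1 hY.2.1
    · intro h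
      have h2 := core K L Y X g⁻¹ hY.1.1 hY.1.2 hX.1.1 hX.2.1
        (by rwa [Set.inter_comm] at h)
      rwa [inv_inv, Set.inter_comm] at h2
  rw [← Set.not_infinite, ← Set.not_infinite] at h1
  exact not_iff_not.mp h1

lemma crosses_iff {L K : Subgroup G} {X Y : Set G}
    (hX : IsNontrivialAlmostInvariant L X) (hY : IsNontrivialAlmostInvariant K Y) (g : G) :
    Crosses K (g • X) Y ↔ Crosses L (g⁻¹ • Y) X := by
  have e1 := corner_inf_iff hX hY g
  have e2 := corner_inf_iff (nontriv_compl hX) hY g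
  have e3 := corner_inf_iff hX (nontriv_compl hY) g
  have e4 := corner_inf_iff (nontriv_compl hX) (nontriv_compl hY) g
  unfold Crosses
  simp only [← Set.smul_set_compl]
  constructor
  · rintro ⟨a, b, c, d⟩
    exact ⟨by rw [Set.inter_comm]; exact e1.mp a, by rw [Set.inter_comm]; exact e3.mp c,
      by rw [Set.inter_comm]; exact e2.mp b, by rw [Set.inter_comm]; exact e4.mp d⟩
  · rintro ⟨a, b, c, d⟩
    exact ⟨e1.mpr (by rw [Set.inter_comm] at a; exact a),
      e2.mpr (by rw [Set.inter_comm] at c; exact c),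
      e3.mpr (by rw [Set.inter_comm] at b; exact b),
      e4.mpr (by rw [Set.inter_comm] at d; exact d)⟩

end ScottAux

theorem inverse_induces_bijection_on_crossing_double_cosets
    {G : Type*} [Group G] [Group.FG G]
    (L K : Subgroup G) (X Y : Set G)
    (hX : IsNontrivialAlmostInvariant L X) (hY : IsNontrivialAlmostInvariant K Y) :
    ∃ φ : DoubleCoset.Quotient (K : Set G) (L : Set G) → DoubleCoset.Quotient (L : Set G) (K : Set G),
      (∀ g : G, φ (DoubleCoset.mk K L g) = DoubleCoset.mk L K g⁻¹) ∧
      Set.BijOn φ (DoubleCoset.mk K L '' {g : G | Crosses K (g • X) Y})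
        (DoubleCoset.mk L K '' {h : G | Crosses L (h • Y) X}) := by
  classical
  have key : ∀ g : G, Crosses K (g • X) Y ↔ Crosses L (g⁻¹ • Y) X :=
    ScottAux.crosses_iff hX hY
  refine ⟨fun q => Quotient.liftOn' q (fun g => DoubleCoset.mk L K g⁻¹) ?_, ?_, ?_, ?_, ?_⟩
  · intro a b hab
    obtain ⟨k, hk, l, hl, rfl⟩ := DoubleCoset.rel_iff.mp hab
    refine (DoubleCoset.eq L K _ _).mpr ⟨l⁻¹, L.inv_mem hl, k⁻¹, K.inv_mem hk, by group⟩
  · intro g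
    rfl
  · -- MapsTo
    rintro q ⟨g, hg, rfl⟩
    exact ⟨g⁻¹, (key g).mp hg, rfl⟩
  · -- InjOn (from global injectivity)
    have hinj : Function.Injective
        (fun q : DoubleCoset.Quotient (K : Set G) (L : Set G) =>
          Quotient.liftOn' q (fun g => DoubleCoset.mk L K g⁻¹) (fun a b hab => by
            obtain ⟨k, hk, l, hl, rfl⟩ := DoubleCoset.rel_iff.mp hab
            exact (DoubleCoset.eq L K _ _).mpr ⟨l⁻¹, L.inv_mem hl, k⁻¹, K.inv_mem hk, by group⟩)) := by
      intro q1 q2 h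
      induction q1 using Quotient.inductionOn' with
      | h a =>
        induction q2 using Quotient.inductionOn' with
        | h b =>
          have h' : DoubleCoset.mk L K a⁻¹ = DoubleCoset.mk L K b⁻¹ := h
          obtain ⟨l, hl, k, hk, hb⟩ := (DoubleCoset.eq L K _ _).mp h'
          refine (DoubleCoset.eq K L a b).mpr ⟨k⁻¹, K.inv_mem hk, l⁻¹, L.inv_mem hl, ?_⟩
          have : b = (l * a⁻¹ * k)⁻¹ := by rw [← hb]; simp
          rw [this]; group
    exact hinj.injOn
  · -- SurjOn
    rintro q ⟨h, hh, rfl⟩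
    refine ⟨DoubleCoset.mk K L h⁻¹, ⟨h⁻¹, (key h⁻¹).mpr (by rwa [inv_inv]), rfl⟩, ?_⟩
    show DoubleCoset.mk L K h⁻¹⁻¹ = DoubleCoset.mk L K h
    rw [inv_inv]
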